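/- arXiv:2306.08523 — 3 statements merged into one kernel-verified Lean document; each statement's English description precedes it below -/
import Mathlib

section
/- For matrices A ∈ ℂ^{n×n}, B ∈ ℂ^{n×m}, C ∈ ℂ^{p×n}, if the block matrix (CB, CAB, CA²B, …, CA^{n-1}B) has rank p, then for every eigenvalue z of A the matrix (C(zI−A), CB) has rank p. -/
open Matrix

lemma rank_eq_card_rows_iff' {p : ℕ} {q : Type*} [Fintype q] (M : Matrix (Fin p) q ℂ) :
    M.rank = p ↔ ∀ v : Fin p → ℂ, v ᵥ* M = 0 → v = 0 := by
  rw [← Matrix.rank_transpose, Matrix.rank]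
  have h := LinearMap.finrank_range_add_finrank_ker (Mᵀ.mulVecLin)
  rw [Module.finrank_fin_fun] at h
  have hkb : (∀ v : Fin p → ℂ, v ᵥ* M = 0 → v = 0) ↔
      LinearMap.ker Mᵀ.mulVecLin = ⊥ := by
    rw [LinearMap.ker_eq_bot']
    constructor
    · intro h2 v hv
      exact h2 v (by simpa [Matrix.mulVecLin_apply, Matrix.mulVec_transpose] using hv)
    · intro h2 v hv
      exact h2 v (by simpa [Matrix.mulVecLin_apply, Matrix.mulVec_transpose] using hv)
  rw [hkb]
  constructor
  · intro hr
    rw [← Submodule.finrank_eq_zero]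
    omega
  · intro hr
    rw [hr, finrank_bot] at h
    omega

theorem stmt0 {n m p : ℕ}
    (A : Matrix (Fin n) (Fin n) ℂ) (B : Matrix (Fin n) (Fin m) ℂ)
    (C : Matrix (Fin p) (Fin n) ℂ)
    (hK : (Matrix.of fun (i : Fin p) (kj : Fin n × Fin m) =>
      (C * A ^ (kj.1 : ℕ) * B) i kj.2).rank = p) :
    ∀ z ∈ spectrum ℂ A,
      (Matrix.fromCols (C * (z • (1 : Matrix (Fin n) (Fin n) ℂ) - A)) (C * B)).rank = p := by
  intro z _
  rw [rank_eq_card_rows_iff'] at hK ⊢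
  intro v hv
  rw [Matrix.vecMul_fromCols] at hv
  have h1 : v ᵥ* (C * (z • (1 : Matrix (Fin n) (Fin n) ℂ) - A)) = 0 :=
    funext fun j => congrFun hv (Sum.inl j)
  have h2 : v ᵥ* (C * B) = 0 :=
    funext fun j => congrFun hv (Sum.inr j)
  set w := v ᵥ* C with hw
  have hA : w ᵥ* A = z • w := by
    rw [← Matrix.vecMul_vecMul, Matrix.vecMul_sub] at h1
    have := sub_eq_zero.mp h1
    have hz : w ᵥ* (z • (1 : Matrix (Fin n) (Fin n) ℂ)) = z • w := by
      ext i
      simp [Matrix.vecMul, dotProduct, Matrix.one_apply, mul_ite, mul_comm, hw]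
    rw [← this, hz]
  have hB : w ᵥ* B = 0 := by rw [← Matrix.vecMul_vecMul] at h2; exact h2
  have hAk : ∀ k : ℕ, w ᵥ* A ^ k = z ^ k • w := by
    intro k
    induction k with
    | zero => simp
    | succ k ih =>
      rw [pow_succ, ← Matrix.vecMul_vecMul, ih, Matrix.smul_vecMul, hA,
        smul_smul, pow_succ]
  apply hK v
  ext kj
  obtain ⟨k, j⟩ := kj
  have : v ᵥ* (C * A ^ (k : ℕ) * B) = 0 := by
    rw [← Matrix.vecMul_vecMul, ← Matrix.vecMul_vecMul, ← hw, hAk,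
      Matrix.smul_vecMul, hB, smul_zero]
  simpa [Matrix.vecMul, dotProduct] using congrFun this j
end

section
/- Let A ∈ ℂ^{n×n}, B ∈ ℂ^{n×m}, C ∈ ℂ^{p×n}. The output controllability Gramian W(t) = ∫₀ᵗ C e^{sA} B Bᴴ e^{sAᴴ} Cᴴ ds is positive definite for some t > 0 if and only if rank(CB, CAB, …, CA^{n-1}B) = p. -/
open Matrix NormedSpace
open scoped ComplexOrder

namespace Stmt12Helper

noncomputable section

/-- If φ vanishes on `[0,1]` and has derivative ψ everywhere, with ψ continuous,
then ψ vanishes on `[0,1]`. -/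
theorem deriv_zero_on_Icc {E : Type*} [NormedAddCommGroup E] [NormedSpace ℝ E]
    {φ ψ : ℝ → E} (hφ : ∀ s, HasDerivAt φ (ψ s) s) (hψ : Continuous ψ)
    (h0 : ∀ s ∈ Set.Icc (0:ℝ) 1, φ s = 0) : ∀ s ∈ Set.Icc (0:ℝ) 1, ψ s = 0 := by
  have hIoo : Set.EqOn ψ 0 (Set.Ioo (0:ℝ) 1) := by
    intro s hs
    have hmem : Set.Ioo (0:ℝ) 1 ∈ nhds s := Ioo_mem_nhds hs.1 hs.2
    have hev : φ =ᶠ[nhds s] fun _ => 0 :=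
      Filter.eventually_of_mem hmem fun y hy => h0 y (Set.Ioo_subset_Icc_self hy)
    have h1 : HasDerivAt (fun _ : ℝ => (0:E)) (ψ s) s :=
      (hφ s).congr_of_eventuallyEq hev.symm
    have h2 : HasDerivAt (fun _ : ℝ => (0:E)) 0 s := hasDerivAt_const s 0
    simpa using h1.unique h2
  have hcl := hIoo.closure hψ continuous_const
  rw [closure_Ioo (by norm_num : (0:ℝ) ≠ 1)] at hcl
  intro s hs
  simpa using hcl hs

/-- A continuous nonnegative function with zero integral on `[0,1]` vanishes there. -/
theorem zero_of_integral_zero {r : ℝ → ℝ} (hr : Continuous r) (hnn : ∀ s, 0 ≤ r s)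
    (h : ∫ s in (0:ℝ)..1, r s = 0) : ∀ s ∈ Set.Icc (0:ℝ) 1, r s = 0 := by
  have hint : ∀ a b : ℝ, IntervalIntegrable r MeasureTheory.volume a b := fun a b =>
    hr.intervalIntegrable a b
  have hderiv : ∀ τ : ℝ, HasDerivAt (fun τ => ∫ s in (0:ℝ)..τ, r s) (r τ) τ := fun τ =>
    intervalIntegral.integral_hasDerivAt_right (hint 0 τ)
      (hr.stronglyMeasurable.stronglyMeasurableAtFilter) hr.continuousAt
  have hR0 : ∀ τ ∈ Set.Icc (0:ℝ) 1, (∫ s in (0:ℝ)..τ, r s) = 0 := by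
    intro τ hτ
    have h1 : 0 ≤ ∫ s in (0:ℝ)..τ, r s :=
      intervalIntegral.integral_nonneg hτ.1 fun s _ => hnn s
    have h3 : 0 ≤ ∫ s in τ..1, r s :=
      intervalIntegral.integral_nonneg hτ.2 fun s _ => hnn s
    have h2 : (∫ s in (0:ℝ)..τ, r s) + ∫ s in τ..1, r s = 0 := by
      rw [intervalIntegral.integral_add_adjacent_intervals (hint 0 τ) (hint τ 1)]; exact h
    linarith
  exact deriv_zero_on_Icc hderiv hr hR0

theorem intervalIntegral_conj {f : ℝ → ℂ} {a b : ℝ} :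
    (starRingEnd ℂ) (∫ s in a..b, f s) = ∫ s in a..b, (starRingEnd ℂ) (f s) := by
  simp only [intervalIntegral]
  rw [map_sub, integral_conj, integral_conj]


theorem vecMul_smul_right {α : Type*} [Monoid α] [DistribMulAction α ℂ] [SMulCommClass α ℂ ℂ]
    {k l : Type*} [Fintype k] (v : k → ℂ) (c : α) (M : Matrix k l ℂ) :
    v ᵥ* (c • M) = c • (v ᵥ* M) := by
  ext j
  simp [Matrix.vecMul, dotProduct, mul_smul_comm, Finset.smul_sum]

variable {n m p : ℕ}

/-- The linear map `M ↦ (v ᵥ* M) ᵥ* B`. -/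
def lmap (B : Matrix (Fin n) (Fin m) ℂ) (v : Fin n → ℂ) :
    Matrix (Fin n) (Fin n) ℂ →ₗ[ℂ] (Fin m → ℂ) where
  toFun M := (v ᵥ* M) ᵥ* B
  map_add' M N := by
    show v ᵥ* (M + N) ᵥ* B = v ᵥ* M ᵥ* B + v ᵥ* N ᵥ* B
    rw [Matrix.vecMul_add, Matrix.add_vecMul]
  map_smul' c M := by
    show v ᵥ* (c • M) ᵥ* B = c • (v ᵥ* M ᵥ* B)
    rw [vecMul_smul_right, Matrix.smul_vecMul]

theorem lmap_eq (A : Matrix (Fin n) (Fin n) ℂ) (B : Matrix (Fin n) (Fin m) ℂ)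
    (C : Matrix (Fin p) (Fin n) ℂ) (u : Fin p → ℂ) (k : ℕ)
    (M : Matrix (Fin n) (Fin n) ℂ) :
    lmap B (u ᵥ* (C * A ^ k)) M = u ᵥ* (C * A ^ k * M * B) := by
  simp [lmap, Matrix.vecMul_vecMul]

theorem hasDerivAt_aux (A : Matrix (Fin n) (Fin n) ℂ) (B : Matrix (Fin n) (Fin m) ℂ)
    (C : Matrix (Fin p) (Fin n) ℂ) (u : Fin p → ℂ) (k : ℕ) (s : ℝ) :
    HasDerivAt (fun s : ℝ => u ᵥ* (C * A ^ k * exp (s • A) * B))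
      (u ᵥ* (C * A ^ (k + 1) * exp (s • A) * B)) s := by
  letI : SeminormedRing (Matrix (Fin n) (Fin n) ℂ) := Matrix.linftyOpSemiNormedRing
  letI : NormedRing (Matrix (Fin n) (Fin n) ℂ) := Matrix.linftyOpNormedRing
  letI : NormedAlgebra ℝ (Matrix (Fin n) (Fin n) ℂ) := Matrix.linftyOpNormedAlgebra
  letI : NormedAlgebra ℂ (Matrix (Fin n) (Fin n) ℂ) := Matrix.linftyOpNormedAlgebra
  have hexp : HasDerivAt (fun s : ℝ => exp (s • A)) (A * exp (s • A)) s := by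
    have h := hasDerivAt_exp_smul_const' (𝕂 := ℝ) A s
    exact h
  have hcomp :=
    (((lmap B (u ᵥ* (C * A ^ k))).toContinuousLinearMap.restrictScalars
      ℝ).hasFDerivAt).comp_hasDerivAt s hexp
  have h1 : (fun s : ℝ =>
      ((lmap B (u ᵥ* (C * A ^ k))).toContinuousLinearMap.restrictScalars ℝ) (exp (s • A)))
      = fun s : ℝ => u ᵥ* (C * A ^ k * exp (s • A) * B) := by
    funext s
    simp [lmap_eq]
  have h2 : ((lmap B (u ᵥ* (C * A ^ k))).toContinuousLinearMap.restrictScalars ℝ)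
      (A * exp (s • A)) = u ᵥ* (C * A ^ (k + 1) * exp (s • A) * B) := by
    have : C * A ^ k * (A * exp (s • A)) * B = C * A ^ (k + 1) * exp (s • A) * B := by
      rw [pow_succ]
      simp [Matrix.mul_assoc]
    simp [lmap_eq, this]
  simp only [Function.comp_def] at hcomp
  rw [← h1, ← h2]
  exact hcomp

theorem cont_aux (A : Matrix (Fin n) (Fin n) ℂ) (B : Matrix (Fin n) (Fin m) ℂ)
    (C : Matrix (Fin p) (Fin n) ℂ) (u : Fin p → ℂ) (k : ℕ) :
    Continuous fun s : ℝ => u ᵥ* (C * A ^ k * exp (s • A) * B) :=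
  continuous_iff_continuousAt.2 fun s => (hasDerivAt_aux A B C u k s).continuousAt

theorem cont_exp_entry (A : Matrix (Fin n) (Fin n) ℂ) (i j : Fin n) :
    Continuous fun s : ℝ => (exp (s • A)) i j := by
  letI : SeminormedRing (Matrix (Fin n) (Fin n) ℂ) := Matrix.linftyOpSemiNormedRing
  letI : NormedRing (Matrix (Fin n) (Fin n) ℂ) := Matrix.linftyOpNormedRing
  letI : NormedAlgebra ℝ (Matrix (Fin n) (Fin n) ℂ) := Matrix.linftyOpNormedAlgebra
  letI : NormedAlgebra ℂ (Matrix (Fin n) (Fin n) ℂ) := Matrix.linftyOpNormedAlgebra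
  have h1 : Continuous fun s : ℝ => exp (s • A) := by
    letI : NormedAlgebra ℚ (Matrix (Fin n) (Fin n) ℂ) := Matrix.linftyOpNormedAlgebra
    have := (exp_continuous (𝔸 := Matrix (Fin n) (Fin n) ℂ)).comp
      (continuous_id.smul (continuous_const : Continuous fun _ : ℝ => A))
    exact this
  let L : Matrix (Fin n) (Fin n) ℂ →ₗ[ℂ] ℂ :=
    { toFun := fun M => M i j, map_add' := fun _ _ => rfl, map_smul' := fun _ _ => rfl }
  exact L.toContinuousLinearMap.continuous.comp h1

theorem exp_vanish (A : Matrix (Fin n) (Fin n) ℂ) (B : Matrix (Fin n) (Fin m) ℂ)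
    (C : Matrix (Fin p) (Fin n) ℂ) (u : Fin p → ℂ)
    (h : ∀ k, u ᵥ* (C * A ^ k * B) = 0) (s : ℝ) :
    u ᵥ* (C * exp (s • A) * B) = 0 := by
  letI : SeminormedRing (Matrix (Fin n) (Fin n) ℂ) := Matrix.linftyOpSemiNormedRing
  letI : NormedRing (Matrix (Fin n) (Fin n) ℂ) := Matrix.linftyOpNormedRing
  letI : NormedAlgebra ℂ (Matrix (Fin n) (Fin n) ℂ) := Matrix.linftyOpNormedAlgebra
  have hsum : Summable fun k : ℕ => ((k.factorial : ℂ)⁻¹) • (s • A) ^ k :=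
    expSeries_summable' (𝕂 := ℂ) (s • A)
  have hexp : exp (s • A) = ∑' k : ℕ, ((k.factorial : ℂ)⁻¹) • (s • A) ^ k := by
    rw [exp_eq_tsum ℂ]
  have hL : ∀ M : Matrix (Fin n) (Fin n) ℂ,
      (lmap B (u ᵥ* C)).toContinuousLinearMap M = u ᵥ* (C * M * B) := by
    intro M
    have := lmap_eq A B C u 0 M
    simpa using this
  have hterm : ∀ k : ℕ,
      (lmap B (u ᵥ* C)).toContinuousLinearMap (((k.factorial : ℂ)⁻¹) • (s • A) ^ k) = 0 := by
    intro k
    rw [hL]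
    rw [smul_pow]
    rw [Matrix.mul_smul, Matrix.mul_smul, Matrix.smul_mul, Matrix.smul_mul,
      vecMul_smul_right, vecMul_smul_right, h k, smul_zero, smul_zero]
  calc u ᵥ* (C * exp (s • A) * B)
      = (lmap B (u ᵥ* C)).toContinuousLinearMap (exp (s • A)) := (hL _).symm
    _ = ∑' k : ℕ, (lmap B (u ᵥ* C)).toContinuousLinearMap (((k.factorial : ℂ)⁻¹) • (s • A) ^ k) := by
        rw [hexp, ContinuousLinearMap.map_tsum _ hsum]
    _ = 0 := by simp [hterm]

theorem pow_vanish (A : Matrix (Fin n) (Fin n) ℂ) (B : Matrix (Fin n) (Fin m) ℂ)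
    (C : Matrix (Fin p) (Fin n) ℂ) (u : Fin p → ℂ)
    (h : ∀ k, k < n → u ᵥ* (C * A ^ k * B) = 0) :
    ∀ k, u ᵥ* (C * A ^ k * B) = 0 := by
  rcases Nat.eq_zero_or_pos n with hn | hn
  · intro k
    have hC : C = 0 := by
      ext i j
      exact absurd j.2 (by omega)
    simp [hC]
  · have hchar := Matrix.aeval_self_charpoly A
    rw [Polynomial.aeval_eq_sum_range, Matrix.charpoly_natDegree_eq_dim,
      Fintype.card_fin, Finset.sum_range_succ] at hchar
    have hc : A.charpoly.coeff n = 1 := by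
      have hmc := A.charpoly_monic.coeff_natDegree
      rwa [Matrix.charpoly_natDegree_eq_dim, Fintype.card_fin] at hmc
    rw [hc, one_smul] at hchar
    have hAn : A ^ n = -∑ x ∈ Finset.range n, A.charpoly.coeff x • A ^ x :=
      eq_neg_of_add_eq_zero_right hchar
    intro k
    induction k using Nat.strong_induction_on with
    | _ k ih =>
      rcases lt_or_ge k n with hk | hk
      · exact h k hk
      · obtain ⟨d, rfl⟩ : ∃ d, k = n + d := ⟨k - n, by omega⟩
        have hsplit : A ^ (n + d) =
            -∑ x ∈ Finset.range n, A.charpoly.coeff x • A ^ (x + d) := by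
          rw [pow_add, hAn, neg_mul, Finset.sum_mul]
          congr 1
          refine Finset.sum_congr rfl fun x _ => ?_
          rw [Matrix.smul_mul, ← pow_add]
        calc u ᵥ* (C * A ^ (n + d) * B)
            = lmap B (u ᵥ* C) (A ^ (n + d)) := by
              have := lmap_eq A B C u 0 (A ^ (n + d)); simpa using this.symm
          _ = -∑ x ∈ Finset.range n, A.charpoly.coeff x • lmap B (u ᵥ* C) (A ^ (x + d)) := by
              rw [hsplit, map_neg, map_sum]
              simp only [_root_.map_smul]
          _ = 0 := by
              refine neg_eq_zero.mpr (Finset.sum_eq_zero fun x hx => ?_)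
              have hxd : u ᵥ* (C * A ^ (x + d) * B) = 0 :=
                ih (x + d) (by have := Finset.mem_range.mp hx; omega)
              have hl : lmap B (u ᵥ* C) (A ^ (x + d)) = u ᵥ* (C * A ^ (x + d) * B) := by
                have := lmap_eq A B C u 0 (A ^ (x + d)); simpa using this
              rw [hl, hxd, smul_zero]

theorem smul_conjTranspose_real (s : ℝ) (A : Matrix (Fin n) (Fin n) ℂ) :
    (s • A)ᴴ = s • Aᴴ := by
  ext i j
  simp [Matrix.conjTranspose_apply, Complex.real_smul]

theorem integrand_eq (A : Matrix (Fin n) (Fin n) ℂ) (B : Matrix (Fin n) (Fin m) ℂ)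
    (C : Matrix (Fin p) (Fin n) ℂ) (s : ℝ) :
    C * exp (s • A) * B * Bᴴ * exp (s • Aᴴ) * Cᴴ =
      (C * exp (s • A) * B) * (C * exp (s • A) * B)ᴴ := by
  have h1 : (C * exp (s • A) * B)ᴴ = Bᴴ * (exp (s • Aᴴ) * Cᴴ) := by
    rw [conjTranspose_mul, conjTranspose_mul, ← Matrix.exp_conjTranspose,
      smul_conjTranspose_real]
  rw [h1]
  simp [Matrix.mul_assoc]

theorem quad_formula (G : Matrix (Fin p) (Fin m) ℂ) (x : Fin p → ℂ) :
    star x ⬝ᵥ (G * Gᴴ) *ᵥ x = ((∑ q, Complex.normSq ((star x ᵥ* G) q) : ℝ) : ℂ) := by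
  rw [← Matrix.mulVec_mulVec, dotProduct_mulVec, Matrix.mulVec_conjTranspose]
  simp only [dotProduct, Pi.star_apply]
  push_cast
  refine Finset.sum_congr rfl fun q _ => ?_
  rw [← Complex.mul_conj]
  rfl

theorem cont_G_entry (A : Matrix (Fin n) (Fin n) ℂ) (B : Matrix (Fin n) (Fin m) ℂ)
    (C : Matrix (Fin p) (Fin n) ℂ) (i : Fin p) (q : Fin m) :
    Continuous fun s : ℝ => (C * exp (s • A) * B) i q := by
  simp only [Matrix.mul_apply]
  exact continuous_finset_sum _ fun b _ =>
    (continuous_finset_sum _ fun a _ =>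
      continuous_const.mul (cont_exp_entry A a b)).mul continuous_const

theorem cont_integrand (A : Matrix (Fin n) (Fin n) ℂ) (B : Matrix (Fin n) (Fin m) ℂ)
    (C : Matrix (Fin p) (Fin n) ℂ) (i j : Fin p) :
    Continuous fun s : ℝ =>
      (C * exp (s • A) * B * Bᴴ * exp (s • Aᴴ) * Cᴴ) i j := by
  have : (fun s : ℝ => (C * exp (s • A) * B * Bᴴ * exp (s • Aᴴ) * Cᴴ) i j)
      = fun s : ℝ => ∑ q, (C * exp (s • A) * B) i q * star ((C * exp (s • A) * B) j q) := by
    funext s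
    rw [integrand_eq A B C s, Matrix.mul_apply]
    simp only [Matrix.conjTranspose_apply]
  rw [this]
  exact continuous_finset_sum _ fun q _ =>
    (cont_G_entry A B C i q).mul (cont_G_entry A B C j q).star

theorem quad_integral (A : Matrix (Fin n) (Fin n) ℂ) (B : Matrix (Fin n) (Fin m) ℂ)
    (C : Matrix (Fin p) (Fin n) ℂ) (t : ℝ) (x : Fin p → ℂ) :
    star x ⬝ᵥ (Matrix.of fun (i j : Fin p) =>
        ∫ s in (0:ℝ)..t, (C * exp (s • A) * B * Bᴴ * exp (s • Aᴴ) * Cᴴ) i j) *ᵥ x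
    = ∫ s in (0:ℝ)..t,
        ((∑ q, Complex.normSq ((star x ᵥ* (C * exp (s • A) * B)) q) : ℝ) : ℂ) := by
  have hint : ∀ (i j : Fin p) (c : ℂ), IntervalIntegrable
      (fun s => c * (C * exp (s • A) * B * Bᴴ * exp (s • Aᴴ) * Cᴴ) i j)
      MeasureTheory.volume 0 t :=
    fun i j c => ((continuous_const.mul (cont_integrand A B C i j))).intervalIntegrable 0 t
  have hpt : ∀ (g : Matrix (Fin p) (Fin p) ℂ),
      (∑ ij : Fin p × Fin p, (star x ij.1 * x ij.2) * g ij.1 ij.2)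
        = ∑ i, star x i * ∑ j, g i j * x j := by
    intro g
    rw [← Finset.univ_product_univ, Finset.sum_product]
    refine Finset.sum_congr rfl fun i _ => ?_
    rw [Finset.mul_sum]
    refine Finset.sum_congr rfl fun j _ => ?_
    ring
  have heq1 : star x ⬝ᵥ (Matrix.of fun (i j : Fin p) =>
        ∫ s in (0:ℝ)..t, (C * exp (s • A) * B * Bᴴ * exp (s • Aᴴ) * Cᴴ) i j) *ᵥ x
      = ∑ ij : Fin p × Fin p, (star x ij.1 * x ij.2) *
          ∫ s in (0:ℝ)..t, (C * exp (s • A) * B * Bᴴ * exp (s • Aᴴ) * Cᴴ) ij.1 ij.2 :=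
    (hpt (Matrix.of fun i j =>
      ∫ s in (0:ℝ)..t, (C * exp (s • A) * B * Bᴴ * exp (s • Aᴴ) * Cᴴ) i j)).symm
  rw [heq1]
  have heq2 : ∀ ij : Fin p × Fin p, (star x ij.1 * x ij.2) *
        (∫ s in (0:ℝ)..t, (C * exp (s • A) * B * Bᴴ * exp (s • Aᴴ) * Cᴴ) ij.1 ij.2)
      = ∫ s in (0:ℝ)..t, (star x ij.1 * x ij.2) *
          (C * exp (s • A) * B * Bᴴ * exp (s • Aᴴ) * Cᴴ) ij.1 ij.2 := fun ij =>
    (intervalIntegral.integral_const_mul _ _).symm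
  rw [Finset.sum_congr rfl fun ij _ => heq2 ij]
  have hsum := intervalIntegral.integral_finset_sum (μ := MeasureTheory.volume)
    (a := (0:ℝ)) (b := t) (s := (Finset.univ : Finset (Fin p × Fin p)))
    (f := fun ij s => (star x ij.1 * x ij.2) *
      (C * exp (s • A) * B * Bᴴ * exp (s • Aᴴ) * Cᴴ) ij.1 ij.2)
    (fun ij _ => hint ij.1 ij.2 _)
  rw [← hsum]
  refine intervalIntegral.integral_congr fun s _ => ?_
  rw [hpt]
  have hq := quad_formula (C * exp (s • A) * B) x
  rw [← integrand_eq] at hq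
  rw [← hq]
  simp only [dotProduct, Matrix.mulVec]

theorem W_hermitian (A : Matrix (Fin n) (Fin n) ℂ) (B : Matrix (Fin n) (Fin m) ℂ)
    (C : Matrix (Fin p) (Fin n) ℂ) (t : ℝ) :
    (Matrix.of fun (i j : Fin p) =>
        ∫ s in (0:ℝ)..t, (C * exp (s • A) * B * Bᴴ * exp (s • Aᴴ) * Cᴴ) i j).IsHermitian := by
  rw [Matrix.IsHermitian]
  ext i j
  simp only [Matrix.conjTranspose_apply, Matrix.of_apply]
  rw [show (star (∫ s in (0:ℝ)..t, (C * exp (s • A) * B * Bᴴ * exp (s • Aᴴ) * Cᴴ) j i) : ℂ)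
      = (starRingEnd ℂ) (∫ s in (0:ℝ)..t,
          (C * exp (s • A) * B * Bᴴ * exp (s • Aᴴ) * Cᴴ) j i) from rfl]
  rw [intervalIntegral_conj]
  refine intervalIntegral.integral_congr fun s _ => ?_
  have hH : ((C * exp (s • A) * B) * (C * exp (s • A) * B)ᴴ).IsHermitian :=
    Matrix.isHermitian_mul_conjTranspose_self _
  rw [integrand_eq A B C s]
  have := congrFun (congrFun hH i) j
  simpa [Matrix.conjTranspose_apply] using this

theorem rank_iff {q : Type*} [Fintype q] (M : Matrix (Fin p) q ℂ) :
    M.rank = p ↔ ∀ u : Fin p → ℂ, u ᵥ* M = 0 → u = 0 := by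
  have hfr : (M.rank = p) ↔ LinearIndependent ℂ (fun i => M i) := by
    rw [linearIndependent_iff_card_eq_finrank_span, Fintype.card_fin]
    have : Set.finrank ℂ (Set.range fun i => M i) = M.rank := by
      rw [Matrix.rank_eq_finrank_span_row]
      rfl
    rw [this]
    exact eq_comm
  rw [hfr, show (fun i => M i) = M.row from rfl, ← Matrix.vecMul_injective_iff]
  constructor
  · intro hinj u hu
    have : M.vecMul u = M.vecMul 0 := by
      show u ᵥ* M = (0 : Fin p → ℂ) ᵥ* M
      rw [hu, Matrix.zero_vecMul]
    exact hinj this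
  · intro h a b hab
    have : (a - b) ᵥ* M = 0 := by
      rw [Matrix.sub_vecMul]
      rw [sub_eq_zero]
      exact hab
    have := h _ this
    exact sub_eq_zero.mp this

end

end Stmt12Helper

open Stmt12Helper in
theorem stmt12 {n m p : ℕ}
    (A : Matrix (Fin n) (Fin n) ℂ) (B : Matrix (Fin n) (Fin m) ℂ)
    (C : Matrix (Fin p) (Fin n) ℂ) :
    (∃ t : ℝ, 0 < t ∧
      (Matrix.of fun (i j : Fin p) =>
        ∫ s in (0:ℝ)..t,
          (C * exp (s • A) * B * Bᴴ * exp (s • Aᴴ) * Cᴴ) i j).PosDef) ↔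
    (Matrix.of fun (i : Fin p) (kj : Fin n × Fin m) =>
      (C * A ^ (kj.1 : ℕ) * B) i kj.2).rank = p := by
  classical
  constructor
  · rintro ⟨t, ht, hPD⟩
    by_contra hrank
    rw [rank_iff] at hrank
    push_neg at hrank
    obtain ⟨u, hu0, hune⟩ := hrank
    have hpowlt : ∀ k, k < n → u ᵥ* (C * A ^ k * B) = 0 := by
      intro k hk
      funext j
      exact congrFun hu0 ((⟨k, hk⟩ : Fin n), j)
    have hpow : ∀ k, u ᵥ* (C * A ^ k * B) = 0 := pow_vanish A B C u hpowlt
    have hexp0 : ∀ s : ℝ, u ᵥ* (C * exp (s • A) * B) = 0 := exp_vanish A B C u hpow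
    have hx : star u ≠ 0 := fun h => hune (by simpa using congrArg star h)
    have hq := (posDef_iff_dotProduct_mulVec.mp hPD).2 hx
    rw [quad_integral] at hq
    simp only [star_star, hexp0] at hq
    simp at hq
  · intro hrank
    refine ⟨1, one_pos, ?_⟩
    refine posDef_iff_dotProduct_mulVec.mpr ⟨W_hermitian A B C 1, fun ⦃x⦄ hx => ?_⟩
    rw [quad_integral A B C 1 x, intervalIntegral.integral_ofReal, Complex.zero_lt_real]
    set u := star x with hu
    set r : ℝ → ℝ :=
      fun s => ∑ q, Complex.normSq ((u ᵥ* (C * exp (s • A) * B)) q) with hr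
    have hzc : ∀ q, Continuous fun s : ℝ => (u ᵥ* (C * exp (s • A) * B)) q := by
      intro q
      simp only [Matrix.vecMul, dotProduct]
      exact continuous_finset_sum _ fun i _ => continuous_const.mul (cont_G_entry A B C i q)
    have hrc : Continuous r :=
      continuous_finset_sum _ fun q _ => Complex.continuous_normSq.comp (hzc q)
    have hnn : ∀ s, 0 ≤ r s := fun s => Finset.sum_nonneg fun q _ => Complex.normSq_nonneg _
    have hI0 : 0 ≤ ∫ s in (0:ℝ)..1, r s :=
      intervalIntegral.integral_nonneg zero_le_one fun s _ => hnn s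
    rcases hI0.lt_or_eq with h | h
    · exact h
    · exfalso
      have hzero := zero_of_integral_zero hrc hnn h.symm
      have hbase : ∀ s ∈ Set.Icc (0:ℝ) 1,
          u ᵥ* (C * A ^ 0 * exp (s • A) * B) = 0 := by
        intro s hs
        have h1 := hzero s hs
        have h2 : ∀ q, (u ᵥ* (C * exp (s • A) * B)) q = 0 := by
          intro q
          have := (Finset.sum_eq_zero_iff_of_nonneg
            (fun q _ => Complex.normSq_nonneg _)).mp h1 q (Finset.mem_univ q)
          exact Complex.normSq_eq_zero.mp this
        rw [pow_zero, Matrix.mul_one]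
        funext q
        exact h2 q
      have hall : ∀ k, ∀ s ∈ Set.Icc (0:ℝ) 1,
          u ᵥ* (C * A ^ k * exp (s • A) * B) = 0 := by
        intro k
        induction k with
        | zero => exact hbase
        | succ k ih =>
          exact deriv_zero_on_Icc (fun s => hasDerivAt_aux A B C u k s)
            (cont_aux A B C u (k + 1)) ih
      have hk0 : ∀ k, u ᵥ* (C * A ^ k * B) = 0 := by
        intro k
        have := hall k 0 ⟨le_refl 0, zero_le_one⟩
        simpa [zero_smul, exp_zero, Matrix.mul_one] using this
      have hu0 : u ᵥ* (Matrix.of fun (i : Fin p) (kj : Fin n × Fin m) =>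
          (C * A ^ (kj.1 : ℕ) * B) i kj.2) = 0 := by
        funext kj
        exact congrFun (hk0 (kj.1 : ℕ)) kj.2
      have huz : u = 0 := (rank_iff _).mp hrank u hu0
      exact hx (by rw [← star_star x, ← hu, huz, star_zero])
end

section
/- Let A = diag(A_1, …, A_N) be block diagonal with A_i ∈ ℂ^{n_i×n_i}, and let z ∈ ℂ be an eigenvalue of A_j for exactly one index j. If for each i the block matrix (C_i(zI−A_i), C_iB_i) has rank p_i (where for i ≠ j this follows since zI−A_i is invertible and C_i has rank p_i), then the block matrix formed from the parallel connection, (C(zI−A), CB) with C = diag(C_1,…,C_N) and B the vertical stack of B_i, has rank p_1 + ⋯ + p_N. -/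
open Matrix

lemma vecMul_eq_zero_of_rank_aux {p : ℕ} {q : Type*} [Fintype q] (M : Matrix (Fin p) q ℂ)
    (h : M.rank = p) (v : Fin p → ℂ) (hv : v ᵥ* M = 0) : v = 0 := by
  have hcard : Fintype.card (Fin p) = Set.finrank ℂ (Set.range M) := by
    have := Matrix.rank_eq_finrank_span_row M
    rw [h] at this
    rw [Set.finrank, Fintype.card_fin]
    exact this
  have li : LinearIndependent ℂ M := linearIndependent_iff_card_eq_finrank_span.mpr hcard
  have hs : ∑ i, v i • M i = 0 := by
    ext j
    have := congrFun hv j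
    simpa [Matrix.vecMul, dotProduct, Finset.sum_apply] using this
  funext i
  exact Fintype.linearIndependent_iff.mp li v hs i

lemma vecMul_blockDiagonal'_aux {N : ℕ} {p n : Fin N → ℕ}
    (M : ∀ i, Matrix (Fin (p i)) (Fin (n i)) ℂ) (v : ((i : Fin N) × Fin (p i)) → ℂ)
    (i : Fin N) (c : Fin (n i)) :
    (v ᵥ* Matrix.blockDiagonal' M) ⟨i, c⟩ = ((fun r => v ⟨i, r⟩) ᵥ* M i) c := by
  simp only [Matrix.vecMul, dotProduct]
  rw [← Finset.univ_sigma_univ, Finset.sum_sigma]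
  rw [Fintype.sum_eq_single i]
  · simp
  · intro k hk
    apply Finset.sum_eq_zero
    intro r _
    rw [Matrix.blockDiagonal'_apply_ne _ _ _ hk, mul_zero]

theorem stmt19 {N m : ℕ} (n p : Fin N → ℕ)
    (A : ∀ i, Matrix (Fin (n i)) (Fin (n i)) ℂ)
    (B : ∀ i, Matrix (Fin (n i)) (Fin m) ℂ)
    (C : ∀ i, Matrix (Fin (p i)) (Fin (n i)) ℂ)
    (z : ℂ) (j : Fin N) (hj : z ∈ spectrum ℂ (A j))
    (hone : ∀ i, i ≠ j → z ∉ spectrum ℂ (A i))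
    (hH : ∀ i,
      (Matrix.fromCols ((C i) * (z • (1 : Matrix (Fin (n i)) (Fin (n i)) ℂ) - A i))
        ((C i) * (B i))).rank = p i) :
    (Matrix.fromCols
      ((Matrix.blockDiagonal' C) *
        (z • (1 : Matrix ((i : Fin N) × Fin (n i)) ((i : Fin N) × Fin (n i)) ℂ) -
          Matrix.blockDiagonal' A))
      ((Matrix.blockDiagonal' C) *
        (Matrix.of fun (x : (i : Fin N) × Fin (n i)) (jc : Fin m) => B x.1 x.2 jc))).rank
    = ∑ i, p i := by
  classical
  set Bst : Matrix ((i : Fin N) × Fin (n i)) (Fin m) ℂ :=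
    Matrix.of fun (x : (i : Fin N) × Fin (n i)) (jc : Fin m) => B x.1 x.2 jc with hBst
  -- rewrite the left block as a block diagonal
  have hL : (Matrix.blockDiagonal' C) *
      (z • (1 : Matrix ((i : Fin N) × Fin (n i)) ((i : Fin N) × Fin (n i)) ℂ) -
        Matrix.blockDiagonal' A) =
      Matrix.blockDiagonal' (fun i =>
        (C i) * (z • (1 : Matrix (Fin (n i)) (Fin (n i)) ℂ) - A i)) := by
    have h1 : Matrix.blockDiagonal'
        (fun i => z • (1 : Matrix (Fin (n i)) (Fin (n i)) ℂ) - A i) =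
        z • (1 : Matrix ((i : Fin N) × Fin (n i)) ((i : Fin N) × Fin (n i)) ℂ) -
          Matrix.blockDiagonal' A := by
      have h2 : (fun i => z • (1 : Matrix (Fin (n i)) (Fin (n i)) ℂ) - A i) =
          (fun i => z • (1 : Matrix (Fin (n i)) (Fin (n i)) ℂ)) - A := rfl
      rw [h2, Matrix.blockDiagonal'_sub]
      congr 1
      rw [show (fun i => z • (1 : Matrix (Fin (n i)) (Fin (n i)) ℂ)) =
        z • (fun i => (1 : Matrix (Fin (n i)) (Fin (n i)) ℂ)) from rfl,
        Matrix.blockDiagonal'_smul]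
      congr 1
      exact Matrix.blockDiagonal'_one
    rw [← h1, ← Matrix.blockDiagonal'_mul]
  rw [hL]
  set F := Matrix.fromCols
      (Matrix.blockDiagonal' (fun i =>
        (C i) * (z • (1 : Matrix (Fin (n i)) (Fin (n i)) ℂ) - A i)))
      ((Matrix.blockDiagonal' C) * Bst) with hF
  -- key: any vanishing row combination is trivial
  have key : ∀ v : ((i : Fin N) × Fin (p i)) → ℂ, v ᵥ* F = 0 → v = 0 := by
    intro v hv
    rw [hF, Matrix.vecMul_fromCols] at hv
    have hv1 : v ᵥ* Matrix.blockDiagonal' (fun i =>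
        (C i) * (z • (1 : Matrix (Fin (n i)) (Fin (n i)) ℂ) - A i)) = 0 := by
      funext c
      exact congrFun hv (Sum.inl c)
    have hv2 : v ᵥ* ((Matrix.blockDiagonal' C) * Bst) = 0 := by
      funext c
      exact congrFun hv (Sum.inr c)
    have hleft : ∀ i, (fun r => v ⟨i, r⟩) ᵥ*
        ((C i) * (z • (1 : Matrix (Fin (n i)) (Fin (n i)) ℂ) - A i)) = 0 := by
      intro i
      funext c
      have h3 := congrFun hv1 ⟨i, c⟩
      rwa [vecMul_blockDiagonal'_aux] at h3
    have hCzero : ∀ i, i ≠ j → (fun r => v ⟨i, r⟩) ᵥ* C i = 0 := by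
      intro i hi
      have hu : IsUnit (z • (1 : Matrix (Fin (n i)) (Fin (n i)) ℂ) - A i) := by
        have h4 := (spectrum.notMem_iff).mp (hone i hi)
        rwa [Algebra.algebraMap_eq_smul_one] at h4
      have hinj := Matrix.vecMul_injective_iff_isUnit.mpr hu
      have h0 : ((fun r => v ⟨i, r⟩) ᵥ* C i) ᵥ*
          (z • (1 : Matrix (Fin (n i)) (Fin (n i)) ℂ) - A i) = 0 := by
        rw [Matrix.vecMul_vecMul]
        exact hleft i
      exact hinj (a₂ := 0) (by simpa [Matrix.zero_vecMul] using h0)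
    -- right condition as a sum over blocks
    have hright : ∑ i, ((fun r => v ⟨i, r⟩) ᵥ* ((C i) * (B i))) = 0 := by
      funext c
      set w := v ᵥ* Matrix.blockDiagonal' C with hw
      have h2 : (w ᵥ* Bst) c = 0 := by
        rw [hw, Matrix.vecMul_vecMul]
        exact congrFun hv2 c
      rw [Finset.sum_apply, Pi.zero_apply]
      have h5 : ∀ i, ((fun r => v ⟨i, r⟩) ᵥ* ((C i) * (B i))) c
          = ∑ r, w ⟨i, r⟩ * B i r c := by
        intro i
        have h6 : ∀ r : Fin (n i), w ⟨i, r⟩ = ((fun r' => v ⟨i, r'⟩) ᵥ* C i) r := fun r =>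
          vecMul_blockDiagonal'_aux C v i r
        rw [← Matrix.vecMul_vecMul]
        simp_rw [h6]
        rfl
      simp_rw [h5]
      rw [← h2]
      show _ = ∑ s : (i : Fin N) × Fin (n i), w s * Bst s c
      rw [← Finset.univ_sigma_univ, Finset.sum_sigma]
      rfl
    -- reduce the sum to the j-th term
    have hrt : ∀ i, (fun r => v ⟨i, r⟩) ᵥ* ((C i) * (B i)) = 0 := by
      have hne : ∀ k, k ≠ j → (fun r => v ⟨k, r⟩) ᵥ* ((C k) * (B k)) = 0 := by
        intro k hk
        rw [← Matrix.vecMul_vecMul, hCzero k hk, Matrix.zero_vecMul]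
      have hsum : ∑ k, ((fun r => v ⟨k, r⟩) ᵥ* ((C k) * (B k)))
          = (fun r => v ⟨j, r⟩) ᵥ* ((C j) * (B j)) := Fintype.sum_eq_single j hne
      intro i
      by_cases hi : i = j
      · subst hi
        rw [← hsum]
        exact hright
      · exact hne i hi
    -- each block's rows are independent
    have hvi : ∀ i, (fun r => v ⟨i, r⟩) = 0 := by
      intro i
      apply vecMul_eq_zero_of_rank_aux _ (hH i)
      rw [Matrix.vecMul_fromCols]
      funext c
      rcases c with c | c
      · exact congrFun (hleft i) c
      · exact congrFun (hrt i) c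
    funext s
    exact congrFun (hvi s.1) s.2
  -- conclude: rows of F are linearly independent, so rank = number of rows
  have li : LinearIndependent ℂ F.row := by
    rw [Fintype.linearIndependent_iff]
    intro g hg
    have hg' : g ᵥ* F = 0 := by
      funext c
      have := congrFun hg c
      simpa [Matrix.vecMul, dotProduct, Finset.sum_apply] using this
    intro s
    exact congrFun (key g hg') s
  rw [li.rank_matrix]
  simp [Fintype.card_sigma]
end
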